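/- Let μ be a finite symmetric Borel measure on ℝ with decomposition μ = μ_c + μ_a into continuous and atomic parts. Assume μ_c ∗ μ_c ≺ μ_c and let Λ be the subgroup of ℝ generated by the atoms of μ_a, with δ_Λ a finite atomic measure whose atom set is Λ. Assume μ_a ≠ 0. Then the joint measure class of (μ^{∗k})_{k ≥ 1} equals the measure class of (μ_c ∗ δ_Λ) + δ_Λ; that is, for every Borel set U ⊂ ℝ: μ^{∗k}(U) = 0 for all k ≥ 1 if and only if (μ_c ∗ δ_Λ)(U) = 0 and δ_Λ(U) = 0. -/

import Mathlib

open MeasureTheory Set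

noncomputable def convPow (μ : MeasureTheory.Measure ℝ) : ℕ → MeasureTheory.Measure ℝ
  | 0 => MeasureTheory.Measure.dirac 0
  | n + 1 => (convPow μ n).conv μ

namespace ConvAux

lemma conv_def (μ ν : Measure ℝ) : μ.conv ν = (μ.prod ν).map (fun p : ℝ × ℝ => p.1 + p.2) := rfl

lemma conv_assoc (μ ν ρ : Measure ℝ) [SFinite μ] [SFinite ν] [SFinite ρ] :
    (μ.conv ν).conv ρ = μ.conv (ν.conv ρ) := by
  rw [conv_def, conv_def, conv_def, conv_def,
    ← Measure.map_id (μ := ρ), Measure.map_prod_map, Measure.map_id (μ := ρ),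
    ← Measure.map_id (μ := μ), Measure.map_prod_map, Measure.map_id (μ := μ),
    Measure.map_map (by fun_prop) (by fun_prop),
    Measure.map_map (by fun_prop) (by fun_prop),
    ← Measure.prodAssoc_prod, Measure.map_map (by fun_prop) (by fun_prop)]
  · congr 1
    ext p
    simp [MeasurableEquiv.prodAssoc, add_assoc]
  all_goals fun_prop

lemma conv_mono_left {ν ρ : Measure ℝ} (σ : Measure ℝ) [IsFiniteMeasure ν] [IsFiniteMeasure ρ]
    [SFinite σ] (h : ν ≤ ρ) : ν.conv σ ≤ ρ.conv σ := by
  have hfin : IsFiniteMeasure (ρ - ν) := isFiniteMeasure_of_le ρ Measure.sub_le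
  have : ρ = (ρ - ν) + ν := (Measure.sub_add_cancel_of_le h).symm
  rw [this, Measure.add_conv]
  exact Measure.le_add_left le_rfl

lemma conv_mono_right {ν ρ : Measure ℝ} (σ : Measure ℝ) [IsFiniteMeasure ν] [IsFiniteMeasure ρ]
    [IsFiniteMeasure σ] (h : ν ≤ ρ) : σ.conv ν ≤ σ.conv ρ := by
  rw [Measure.conv_comm, Measure.conv_comm σ ρ]
  exact conv_mono_left σ h

lemma ac_conv_left {ν ρ : Measure ℝ} (σ : Measure ℝ) [SFinite ν] [SFinite ρ] [SFinite σ]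
    (h : ν ≪ ρ) : ν.conv σ ≪ ρ.conv σ := by
  rw [conv_def, conv_def]
  exact (h.prod Measure.AbsolutelyContinuous.rfl).map (by fun_prop)

lemma ac_conv_right {ν ρ : Measure ℝ} (σ : Measure ℝ) [SFinite ν] [SFinite ρ] [SFinite σ]
    (h : ν ≪ ρ) : σ.conv ν ≪ σ.conv ρ := by
  rw [Measure.conv_comm, Measure.conv_comm σ ρ]
  exact ac_conv_left σ h

lemma conv_apply (ν σ : Measure ℝ) [SFinite ν] [SFinite σ] {U : Set ℝ} (hU : MeasurableSet U) :
    ν.conv σ U = ∫⁻ x, σ {y | x + y ∈ U} ∂ν := by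
  rw [conv_def, Measure.map_apply (by fun_prop) hU,
    Measure.prod_apply (hU.preimage (by fun_prop))]
  rfl

lemma le_conv_apply (ν σ : Measure ℝ) [IsFiniteMeasure ν] [IsFiniteMeasure σ] (y : ℝ)
    {U : Set ℝ} (hU : MeasurableSet U) : ν {y} * σ {x | y + x ∈ U} ≤ ν.conv σ U := by
  have h1 : (ν.restrict {y}).conv σ ≤ ν.conv σ := conv_mono_left σ Measure.restrict_le_self
  have h2 : ((ν.restrict {y}).conv σ) U = ν {y} * σ {x | y + x ∈ U} := by
    rw [conv_apply _ _ hU, Measure.restrict_singleton, lintegral_smul_measure, lintegral_dirac, smul_eq_mul]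
  rw [← h2]
  exact h1 U

lemma conv_singleton_le (ν σ : Measure ℝ) [IsFiniteMeasure ν] [IsFiniteMeasure σ] (a b : ℝ) :
    ν {a} * σ {b} ≤ ν.conv σ {a + b} := by
  have := le_conv_apply ν σ a (U := {a + b}) (measurableSet_singleton _)
  have hs : {x : ℝ | a + x ∈ ({a + b} : Set ℝ)} = {b} := by
    ext x; simp [add_right_cancel_iff, eq_comm]
  rwa [hs] at this

instance convPow_finite (μ : Measure ℝ) [IsFiniteMeasure μ] (n : ℕ) :
    IsFiniteMeasure (convPow μ n) := by
  induction n with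
  | zero => exact inferInstanceAs (IsFiniteMeasure (Measure.dirac 0))
  | succ n ih => exact inferInstanceAs (IsFiniteMeasure ((convPow μ n).conv μ))

lemma convPow_one (μ : Measure ℝ) [IsFiniteMeasure μ] : convPow μ 1 = μ := by
  show (Measure.dirac 0).conv μ = μ
  simp

lemma convPow_add (μ : Measure ℝ) [IsFiniteMeasure μ] (j k : ℕ) :
    convPow μ (j + k) = (convPow μ j).conv (convPow μ k) := by
  induction k with
  | zero => show convPow μ j = (convPow μ j).conv (Measure.dirac 0); simp
  | succ k ih =>
      show (convPow μ (j + k)).conv μ = (convPow μ j).conv ((convPow μ k).conv μ)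
      rw [ih, conv_assoc]

lemma convPow_mono {ν μ : Measure ℝ} [IsFiniteMeasure ν] [IsFiniteMeasure μ] (h : ν ≤ μ)
    (k : ℕ) : convPow ν k ≤ convPow μ k := by
  induction k with
  | zero => exact le_rfl
  | succ k ih =>
      show (convPow ν k).conv ν ≤ (convPow μ k).conv μ
      calc (convPow ν k).conv ν ≤ (convPow μ k).conv ν := conv_mono_left _ ih
        _ ≤ (convPow μ k).conv μ := conv_mono_right _ h

end ConvAux

open ConvAux

theorem stmt11 (μ μc μa : Measure ℝ)
    [IsFiniteMeasure μ] [IsFiniteMeasure μc] [IsFiniteMeasure μa]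
    (hsum : μ = μc + μa)
    (hsym : μ.map (fun x : ℝ => -x) = μ)
    (hcont : ∀ x : ℝ, μc {x} = 0)
    (hatomic : μa ({x : ℝ | 0 < μa {x}}ᶜ) = 0)
    (hconv : μc.conv μc ≪ μc)
    (Λ : AddSubgroup ℝ) (hΛ : Λ = AddSubgroup.closure {x : ℝ | 0 < μa {x}})
    (δ : Measure ℝ) [IsFiniteMeasure δ]
    (hatoms : ∀ x : ℝ, 0 < δ {x} ↔ x ∈ Λ)
    (hconc : δ ((Λ : Set ℝ)ᶜ) = 0)
    (hμa : μa ≠ 0) :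
    ∀ U : Set ℝ, MeasurableSet U →
      ((∀ k : ℕ, 1 ≤ k → convPow μ k U = 0) ↔ ((μc.conv δ) U = 0 ∧ δ U = 0)) := by
  -- basic facts
  have hA : {x : ℝ | 0 < μa {x}} ⊆ (Λ : Set ℝ) := by
    rw [hΛ]; exact AddSubgroup.subset_closure
  have hΛc : (Λ : Set ℝ).Countable := by
    have hsub : (Λ : Set ℝ) ⊆ {x : ℝ | 0 < δ {x}} := fun x hx => (hatoms x).2 hx
    have hcnt : Set.Countable {x : ℝ | 0 < δ {x}} := by
      have := MeasureTheory.Measure.countable_meas_pos_of_disjoint_iUnion (μ := δ) (As := fun x : ℝ => ({x} : Set ℝ))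
        (fun x => measurableSet_singleton x)
        (fun x y hxy => by simpa [Function.onFun] using Set.disjoint_singleton.mpr hxy)
      simpa using this
    exact hcnt.mono hsub
  have hΛm : MeasurableSet (Λ : Set ℝ) := hΛc.measurableSet
  -- concentration on Λ implies absolute continuity w.r.t. δ
  have acδ : ∀ ν : Measure ℝ, ν ((Λ : Set ℝ)ᶜ) = 0 → ν ≪ δ := by
    intro ν hν
    refine Measure.AbsolutelyContinuous.mk (fun s _ hs => ?_)
    have hsub : s ⊆ (Λ : Set ℝ)ᶜ := by
      intro x hx hxΛ
      have h1 : 0 < δ {x} := (hatoms x).2 hxΛ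
      have h2 : δ {x} ≤ δ s := measure_mono (singleton_subset_iff.2 hx)
      rw [hs] at h2
      exact absurd (le_antisymm h2 zero_le) h1.ne'
    exact measure_mono_null hsub hν
  have hμaΛ : μa ((Λ : Set ℝ)ᶜ) = 0 :=
    measure_mono_null (compl_subset_compl.2 hA) hatomic
  have acμa : μa ≪ δ := acδ μa hμaΛ
  have haeΛ : ∀ᵐ x ∂δ, x ∈ (Λ : Set ℝ) := by
    rw [ae_iff]; exact hconc
  have hδδΛ : (δ.conv δ) ((Λ : Set ℝ)ᶜ) = 0 := by
    rw [conv_apply _ _ hΛm.compl]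
    have h0 : ∫⁻ x, δ {y | x + y ∈ (Λ : Set ℝ)ᶜ} ∂δ = ∫⁻ _, 0 ∂δ := by
      refine lintegral_congr_ae ?_
      filter_upwards [haeΛ] with x hx
      refine measure_mono_null ?_ hconc
      intro y hy
      intro hyΛ
      exact hy (Λ.add_mem hx hyΛ)
    rw [h0, lintegral_zero]
  have acδδ : δ.conv δ ≪ δ := acδ _ hδδΛ
  have hδ0 : 0 < δ {0} := (hatoms 0).2 Λ.zero_mem
  -- μc ≪ μc ∗ δ
  have acμc : μc ≪ μc.conv δ := by
    refine Measure.AbsolutelyContinuous.mk (fun s hs h0 => ?_)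
    have hle := le_conv_apply δ μc 0 hs
    have hset : {x : ℝ | (0 : ℝ) + x ∈ s} = s := by ext x; simp
    rw [hset, Measure.conv_comm δ μc, h0] at hle
    rcases mul_eq_zero.1 (le_antisymm hle zero_le) with h | h
    · exact absurd h hδ0.ne'
    · exact h
  -- absolute continuity of convolution powers w.r.t. μc ∗ δ + δ
  have hadd1 : ∀ ρ σ : Measure ℝ, ρ ≪ ρ + σ := by
    intro ρ σ s hs
    rw [Measure.add_apply] at hs
    exact (add_eq_zero.1 hs).1
  have hadd2 : ∀ ρ σ : Measure ℝ, σ ≪ ρ + σ := by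
    intro ρ σ s hs
    rw [Measure.add_apply] at hs
    exact (add_eq_zero.1 hs).2
  have acadd : ∀ {ν₁ ν₂ τ : Measure ℝ}, ν₁ ≪ τ → ν₂ ≪ τ → ν₁ + ν₂ ≪ τ := by
    intro ν₁ ν₂ τ h1 h2 s hs
    rw [Measure.add_apply, h1 hs, h2 hs, add_zero]
  have acμ : μ ≪ μc.conv δ + δ := by
    rw [hsum]
    exact acadd (acμc.trans (hadd1 _ _)) (acμa.trans (hadd2 _ _))
  have acstep : (μc.conv δ + δ).conv μ ≪ μc.conv δ + δ := by
    rw [Measure.add_conv, hsum, Measure.conv_add, Measure.conv_add]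
    have t1 : (μc.conv δ).conv μc ≪ μc.conv δ := by
      rw [conv_assoc, Measure.conv_comm δ μc, ← conv_assoc]
      exact ac_conv_left _ hconv
    have t2 : (μc.conv δ).conv μa ≪ μc.conv δ := by
      refine (ac_conv_right _ acμa).trans ?_
      rw [conv_assoc]
      exact ac_conv_right _ acδδ
    have t3 : δ.conv μc ≪ μc.conv δ := by
      rw [Measure.conv_comm]
    have t4 : δ.conv μa ≪ δ := (ac_conv_right _ acμa).trans acδδ
    exact acadd (acadd (t1.trans (hadd1 _ _)) (t2.trans (hadd1 _ _)))
      (acadd (t3.trans (hadd1 _ _)) (t4.trans (hadd2 _ _)))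
  have acsum : ∀ k : ℕ, 1 ≤ k → convPow μ k ≪ μc.conv δ + δ := by
    intro k hk
    induction k with
    | zero => omega
    | succ k ih =>
        rcases Nat.eq_or_lt_of_le hk with h | h
        · rw [show k + 1 = 1 by omega, convPow_one]
          exact acμ
        · have ihk := ih (by omega)
          show (convPow μ k).conv μ ≪ _
          exact (ac_conv_left μ ihk).trans acstep
  -- symmetry of atoms
  have hμx : ∀ x : ℝ, μ {x} = μa {x} := fun x => by
    rw [hsum, Measure.add_apply, hcont, zero_add]
  have hsymm_atom : ∀ x : ℝ, μa {x} = μa {-x} := by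
    intro x
    have hpre : (fun y : ℝ => -y) ⁻¹' {x} = {-x} := by
      ext y; simp [neg_eq_iff_eq_neg]
    have hmap : (μ.map (fun y : ℝ => -y)) {x} = μ {-x} := by
      rw [Measure.map_apply (by fun_prop) (measurableSet_singleton x), hpre]
    rw [← hμx, ← hμx, ← hmap, hsym]
  have hA_ex : ∃ x : ℝ, 0 < μa {x} := by
    by_contra h
    push_neg at h
    apply hμa
    have hempty : {x : ℝ | 0 < μa {x}} = ∅ := by
      ext x; simpa using (h x).not_gt
    rw [← Measure.measure_univ_eq_zero]
    have := hatomic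
    rw [hempty, Set.compl_empty] at this
    exact this
  -- every element of Λ carries an atom of some convolution power of μa
  have hkey : ∀ y ∈ (Λ : Set ℝ), ∃ k : ℕ, 1 ≤ k ∧ 0 < convPow μa k {y} := by
    intro y hy
    have hneg : -{x : ℝ | 0 < μa {x}} = {x : ℝ | 0 < μa {x}} := by
      ext x
      simp only [Set.mem_neg, Set.mem_setOf_eq]
      rw [← hsymm_atom x]
    have hy' : y ∈ AddSubmonoid.closure {x : ℝ | 0 < μa {x}} := by
      have hyg : y ∈ AddSubgroup.closure {x : ℝ | 0 < μa {x}} := by rw [← hΛ]; exact hy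
      have hts := AddSubgroup.closure_toAddSubmonoid {x : ℝ | 0 < μa {x}}
      rw [hneg, Set.union_self] at hts
      rw [← hts]
      exact hyg
    refine AddSubmonoid.closure_induction ?_ ?_ ?_ hy'
    · intro x hx
      exact ⟨1, le_rfl, by rw [convPow_one]; exact hx⟩
    · obtain ⟨x, hx⟩ := hA_ex
      refine ⟨2, by norm_num, ?_⟩
      have h2 : convPow μa 2 = μa.conv μa := by
        rw [show (2 : ℕ) = 1 + 1 from rfl, convPow_add, convPow_one]
      have hx' : 0 < μa {-x} := by rw [← hsymm_atom]; exact hx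
      have hmul : 0 < μa {x} * μa {-x} := ENNReal.mul_pos hx.ne' hx'.ne'
      have hle := conv_singleton_le μa μa x (-x)
      rw [add_neg_cancel] at hle
      rw [h2]
      exact lt_of_lt_of_le hmul hle
    · rintro y z _ _ ⟨j, hj, hjp⟩ ⟨k, hk, hkp⟩
      refine ⟨j + k, by omega, ?_⟩
      rw [convPow_add]
      exact lt_of_lt_of_le (ENNReal.mul_pos hjp.ne' hkp.ne') (conv_singleton_le _ _ y z)
  have hμale : μa ≤ μ := by rw [hsum]; exact Measure.le_add_left le_rfl
  have hμcle : μc ≤ μ := by rw [hsum]; exact Measure.le_add_right le_rfl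
  -- main statement
  intro U hU
  constructor
  · intro H
    have hUΛ : U ⊆ (Λ : Set ℝ)ᶜ := by
      intro x hxU hxΛ
      obtain ⟨k, hk1, hk⟩ := hkey x hxΛ
      have hle : convPow μa k ≤ convPow μ k := convPow_mono hμale k
      have h0 : convPow μ k {x} = 0 :=
        measure_mono_null (singleton_subset_iff.2 hxU) (H k hk1)
      have : convPow μa k {x} = 0 := le_antisymm (h0 ▸ hle {x}) zero_le
      exact hk.ne' this
    have hδU : δ U = 0 := measure_mono_null hUΛ hconc
    refine ⟨?_, hδU⟩
    rw [Measure.conv_comm, conv_apply _ _ hU]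
    have h0 : ∫⁻ y, μc {x | y + x ∈ U} ∂δ = ∫⁻ _, 0 ∂δ := by
      refine lintegral_congr_ae ?_
      filter_upwards [haeΛ] with y hyΛ
      obtain ⟨k, hk1, hk⟩ := hkey y hyΛ
      have h1 : (convPow μa k).conv μc ≤ (convPow μ k).conv μ :=
        le_trans (conv_mono_left _ (convPow_mono hμale k)) (conv_mono_right _ hμcle)
      have h2 := le_conv_apply (convPow μa k) μc y hU
      have h3 : convPow μ (k + 1) U = 0 := H (k + 1) (by omega)
      have h4 : convPow μa k {y} * μc {x | y + x ∈ U} = 0 := by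
        refine le_antisymm ?_ zero_le
        calc convPow μa k {y} * μc {x | y + x ∈ U} ≤ ((convPow μa k).conv μc) U := h2
          _ ≤ ((convPow μ k).conv μ) U := h1 U
          _ = 0 := h3
      rcases mul_eq_zero.1 h4 with h | h
      · exact absurd h hk.ne'
      · exact h
    rw [h0, lintegral_zero]
  · rintro ⟨h1, h2⟩ k hk
    apply acsum k hk
    rw [Measure.add_apply, h1, h2, add_zero]
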